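/- If a finite-dimensional Lie algebra g admits an ad-invariant nondegenerate symmetric bilinear form, then dim g = dim C^r(g) + dim C_r(g) for every r ≥ 0, where C^r and C_r denote the lower and upper central series respectively. -/

import Mathlib

/-- If g carries an ad-invariant nondegenerate symmetric bilinear form then
dim g = dim C^r(g) + dim C_r(g) for every r. -/
theorem finrank_eq_finrank_lcs_add_finrank_ucs
    {K L : Type*} [Field K] [CharZero K] [LieRing L] [LieAlgebra K L]
    [FiniteDimensional K L]
    (B : L →ₗ[K] L →ₗ[K] K)
    (hsymm : ∀ x y : L, B x y = B y x)
    (hnd : ∀ x : L, (∀ y : L, B x y = 0) → x = 0)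
    (hinv : ∀ x y z : L, B ⁅x, y⁆ z + B y ⁅x, z⁆ = 0) :
    ∀ r : ℕ, Module.finrank K L =
      Module.finrank K (LieModule.lowerCentralSeries K L L r : Submodule K L) +
      Module.finrank K (((⊥ : LieSubmodule K L L).ucs r : LieSubmodule K L L) : Submodule K L) := by
  set B' : LinearMap.BilinForm K L := B with hB'
  have hrefl : B'.IsRefl := fun x y h => by rw [hB', hsymm]; exact h
  have hndg : B'.Nondegenerate :=
    (LinearMap.IsRefl.nondegenerate_iff_separatingLeft hrefl).mpr fun x h => hnd x h
  -- key: the upper central series is the orthogonal of the lower central series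
  have key : ∀ r : ℕ, (((⊥ : LieSubmodule K L L).ucs r : LieSubmodule K L L) : Submodule K L)
      = B'.orthogonal (LieModule.lowerCentralSeries K L L r : Submodule K L) := by
    intro r
    induction r with
    | zero =>
      simp only [LieSubmodule.ucs_zero]
      ext x
      simp only [LieSubmodule.bot_toSubmodule, Submodule.mem_bot,
        LinearMap.BilinForm.mem_orthogonal_iff]
      constructor
      · rintro rfl n _
        simp [LinearMap.BilinForm.IsOrtho]
      · intro h
        exact hnd x fun y => hsymm x y ▸ h y (by simp [LieModule.lowerCentralSeries])
    | succ r ih =>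
      ext x
      rw [LieSubmodule.ucs_succ]
      simp only [LieIdeal.toLieSubalgebra_toSubmodule, LieSubmodule.mem_toSubmodule]
      rw [LieSubmodule.mem_normalizer]
      constructor
      · intro h
        rw [LinearMap.BilinForm.mem_orthogonal_iff]
        intro n hn
        simp only [LieIdeal.toLieSubalgebra_toSubmodule,
          LieSubmodule.mem_toSubmodule, LieModule.lowerCentralSeries_succ] at hn
        have hn' : n ∈ (↑(⁅(⊤ : LieIdeal K L), LieModule.lowerCentralSeries K L L r⁆ :
            LieSubmodule K L L) : Submodule K L) := hn
        rw [LieIdeal.toLieSubalgebra_toSubmodule,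
          LieSubmodule.lieIdeal_oper_eq_linear_span] at hn'
        -- it suffices to check on generators since n ↦ B n x is linear
        have : n ∈ LinearMap.ker ((B.flip) x) := by
          refine Submodule.span_le.mpr ?_ hn'
          rintro m ⟨⟨y, -⟩, ⟨z, hz⟩, rfl⟩
          have h1 := hinv y z x
          have h2 : ⁅y, x⁆ ∈ ((⊥ : LieSubmodule K L L).ucs r : Submodule K L) := by
            exact_mod_cast h y
          rw [ih, LinearMap.BilinForm.mem_orthogonal_iff] at h2
          have h3 : B' z ⁅y, x⁆ = 0 := h2 z hz
          simp only [LinearMap.mem_ker, LinearMap.flip_apply]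
          show B' ⁅y, z⁆ x = 0
          rw [h3, add_zero] at h1
          exact h1
        simpa using this
      · intro h y
        have h2 : ⁅y, x⁆ ∈ ((⊥ : LieSubmodule K L L).ucs r : Submodule K L) := by
          rw [ih, LinearMap.BilinForm.mem_orthogonal_iff]
          intro z hz
          have hz' : z ∈ LieModule.lowerCentralSeries K L L r := hz
          have hzy : ⁅(y : L), (z : L)⁆ ∈ LieModule.lowerCentralSeries K L L (r + 1) := by
            rw [LieModule.lowerCentralSeries_succ]
            exact LieSubmodule.lie_mem_lie (I := ⊤)
              (N := LieModule.lowerCentralSeries K L L r) (LieSubmodule.mem_top y) hz'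
          have h1 := hinv y z x
          have h3 : B' ⁅y, z⁆ x = 0 :=
            (LinearMap.BilinForm.mem_orthogonal_iff.mp h) _ hzy
          show B' z ⁅y, x⁆ = 0
          rw [h3, zero_add] at h1
          exact h1
        exact_mod_cast h2
  intro r
  rw [key r, LinearMap.BilinForm.finrank_orthogonal hndg]
  have : Module.finrank K (LieModule.lowerCentralSeries K L L r : Submodule K L)
      ≤ Module.finrank K L := Submodule.finrank_le _
  omega
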